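/- Let d be a positive integer. Let (M, dist) be a compact metric space with at least two points and let vol be a finite Borel measure on M satisfying the uniform volume-density condition: sup_{p∈M} |vol(B(p,r))/(ω_d r^d) − 1| → 0 as r → 0+. Let ν be a Borel probability measure on M that is absolutely continuous with respect to vol with density h ∈ L_1(vol). Then for every r > 0, for vol-almost every x ∈ M: n·ν(B(x, r·n^{−1/d})) → ω_d·r^d·h(x) as n → ∞. -/

import Mathlib

open MeasureTheory Metric Filter
open scoped NNReal ENNReal

/-- The Lebesgue volume of the Euclidean unit ball in `ℝ^d`. -/
noncomputable def unitBallVol (d : ℕ) : ℝ :=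
  (volume (ball (0 : EuclideanSpace ℝ (Fin d)) 1)).toReal

lemma unitBallVol_pos (d : ℕ) : 0 < unitBallVol d :=
  ENNReal.toReal_pos (measure_ball_pos _ _ one_pos).ne' measure_ball_lt_top.ne

set_option maxHeartbeats 1000000 in
/-- for `vol`-a.e. `x`, the blown-up small-ball probabilities
`n · ν(B(x, r n^{-1/d}))` converge to `ω_d r^d h(x)`. -/
theorem small_ball_probability_limit
    {M : Type*} [MetricSpace M] [CompactSpace M] [Nontrivial M]
    [MeasurableSpace M] [BorelSpace M]
    (d : ℕ) (hd : 0 < d)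
    (vol : Measure M) [IsFiniteMeasure vol]
    (hdens : ∀ ε : ℝ, 0 < ε → ∃ r₀ : ℝ, 0 < r₀ ∧ ∀ r : ℝ, 0 < r → r < r₀ →
      ∀ p : M, |(vol (ball p r)).toReal / (unitBallVol d * r ^ d) - 1| ≤ ε)
    (ν : Measure M) [IsProbabilityMeasure ν]
    (h : M → ℝ) (hhmeas : Measurable h) (hhnonneg : ∀ x, 0 ≤ h x)
    (hhint : Integrable h vol)
    (hν : ν = vol.withDensity (fun x => ENNReal.ofReal (h x))) :
    ∀ r : ℝ, 0 < r → ∀ᵐ x ∂vol,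
      Tendsto (fun n : ℕ => (n : ℝ) * (ν (ball x (r * (n : ℝ) ^ (-(1 : ℝ) / d)))).toReal)
        atTop (nhds (unitBallVol d * r ^ d * h x)) := by
  set ω := unitBallVol d with hωdef
  have hωpos : 0 < ω := unitBallVol_pos d
  have hdcast : (0 : ℝ) < (d : ℝ) := by exact_mod_cast hd
  -- two-sided bounds for open balls
  have hopen : ∀ ε : ℝ, 0 < ε → ∃ r₀ : ℝ, 0 < r₀ ∧ ∀ ρ : ℝ, 0 < ρ → ρ < r₀ → ∀ p : M,
      (1 - ε) * (ω * ρ ^ d) ≤ (vol (ball p ρ)).toReal ∧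
        (vol (ball p ρ)).toReal ≤ (1 + ε) * (ω * ρ ^ d) := by
    intro ε hε
    obtain ⟨r₀, hr₀, H⟩ := hdens ε hε
    refine ⟨r₀, hr₀, fun ρ hρ hρ' p => ?_⟩
    have hpos : 0 < ω * ρ ^ d := by positivity
    have := abs_le.1 (H ρ hρ hρ' p)
    constructor
    · have h1 : 1 - ε ≤ (vol (ball p ρ)).toReal / (ω * ρ ^ d) := by linarith [this.1]
      calc (1 - ε) * (ω * ρ ^ d) ≤ ((vol (ball p ρ)).toReal / (ω * ρ ^ d)) * (ω * ρ ^ d) :=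
            mul_le_mul_of_nonneg_right h1 hpos.le
        _ = (vol (ball p ρ)).toReal := div_mul_cancel₀ _ hpos.ne'
    · have h1 : (vol (ball p ρ)).toReal / (ω * ρ ^ d) ≤ 1 + ε := by linarith [this.2]
      calc (vol (ball p ρ)).toReal = ((vol (ball p ρ)).toReal / (ω * ρ ^ d)) * (ω * ρ ^ d) :=
            (div_mul_cancel₀ _ hpos.ne').symm
        _ ≤ (1 + ε) * (ω * ρ ^ d) := mul_le_mul_of_nonneg_right h1 hpos.le
  -- two-sided bounds for closed balls
  have hclosed : ∀ ε : ℝ, 0 < ε → ∃ r₀ : ℝ, 0 < r₀ ∧ ∀ ρ : ℝ, 0 < ρ → ρ < r₀ → ∀ p : M,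
      (1 - ε) * (ω * ρ ^ d) ≤ (vol (closedBall p ρ)).toReal ∧
        (vol (closedBall p ρ)).toReal ≤ (1 + ε) * (ω * ρ ^ d) := by
    intro ε hε
    obtain ⟨r₀, hr₀, H⟩ := hopen (ε / 2) (by linarith)
    -- find t > 1 with (1+ε/2) t^d < 1+ε
    have hcont : ContinuousAt (fun t : ℝ => (1 + ε / 2) * t ^ d) 1 := by fun_prop
    have hlt : (1 + ε / 2) * (1 : ℝ) ^ d < 1 + ε := by simp; linarith
    have hev : ∀ᶠ t in nhds (1 : ℝ), (1 + ε / 2) * t ^ d < 1 + ε :=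
      hcont.eventually_lt continuousAt_const hlt
    obtain ⟨t, htpr, ht1⟩ : ∃ t : ℝ, ((1 + ε / 2) * t ^ d < 1 + ε) ∧ t ∈ Set.Ioi (1 : ℝ) :=
      ((hev.filter_mono (nhdsWithin_le_nhds (s := Set.Ioi (1 : ℝ)))).and
        eventually_mem_nhdsWithin).exists
    have ht1' : (1 : ℝ) < t := ht1
    have htpos : 0 < t := by linarith
    refine ⟨r₀ / t, by positivity, fun ρ hρ hρ' p => ?_⟩
    have hρr₀ : ρ < r₀ := hρ'.trans (div_lt_self hr₀ ht1')
    have htρ : t * ρ < r₀ := by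
      rw [lt_div_iff₀ htpos] at hρ'
      nlinarith
    constructor
    · have hsub : ball p ρ ⊆ closedBall p ρ := ball_subset_closedBall
      have := (H ρ hρ hρr₀ p).1
      have hm : (vol (ball p ρ)).toReal ≤ (vol (closedBall p ρ)).toReal :=
        (ENNReal.toReal_le_toReal (measure_ne_top _ _) (measure_ne_top _ _)).2
          (measure_mono hsub)
      have : (1 - ε) * (ω * ρ ^ d) ≤ (1 - ε / 2) * (ω * ρ ^ d) := by
        apply mul_le_mul_of_nonneg_right (by linarith) (by positivity)
      linarith
    · have hsub : closedBall p ρ ⊆ ball p (t * ρ) :=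
        closedBall_subset_ball (by nlinarith)
      have hm : (vol (closedBall p ρ)).toReal ≤ (vol (ball p (t * ρ))).toReal :=
        (ENNReal.toReal_le_toReal (measure_ne_top _ _) (measure_ne_top _ _)).2
          (measure_mono hsub)
      have h2 := (H (t * ρ) (by positivity) htρ p).2
      have heq : (1 + ε / 2) * (ω * (t * ρ) ^ d) = ((1 + ε / 2) * t ^ d) * (ω * ρ ^ d) := by
        rw [mul_pow]; ring
      have h3 : ((1 + ε / 2) * t ^ d) * (ω * ρ ^ d) ≤ (1 + ε) * (ω * ρ ^ d) :=
        mul_le_mul_of_nonneg_right htpr.le (by positivity)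
      rw [heq] at h2
      linarith
  -- vol is uniformly locally doubling
  haveI : IsUnifLocDoublingMeasure vol := by
    obtain ⟨r₀, hr₀, H⟩ := hclosed (1 / 2) (by norm_num)
    refine ⟨⟨3 * 2 ^ d, ?_⟩⟩
    have hmem : Set.Ioo (0 : ℝ) (r₀ / 2) ∈ nhdsWithin (0 : ℝ) (Set.Ioi 0) :=
      Ioo_mem_nhdsGT_of_mem ⟨le_rfl, by positivity⟩
    filter_upwards [hmem] with ε hε
    intro x
    have hε0 : 0 < ε := hε.1
    have h2ε : 2 * ε < r₀ := by have := hε.2; linarith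
    have hεr₀ : ε < r₀ := by linarith
    have hup := (H (2 * ε) (by positivity) h2ε x).2
    have hlo := (H ε hε0 hεr₀ x).1
    rw [← ENNReal.toReal_le_toReal (measure_ne_top _ _)
      (ENNReal.mul_ne_top ENNReal.coe_ne_top (measure_ne_top _ _))]
    rw [ENNReal.toReal_mul, ENNReal.coe_toReal]
    have hcoe : ((3 * 2 ^ d : ℝ≥0) : ℝ) = 3 * 2 ^ d := by push_cast; ring
    rw [hcoe]
    calc (vol (closedBall x (2 * ε))).toReal ≤ (1 + 1 / 2) * (ω * (2 * ε) ^ d) := hup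
      _ = (3 * 2 ^ d) * ((1 - 1 / 2) * (ω * ε ^ d)) := by rw [mul_pow]; ring
      _ ≤ (3 * 2 ^ d) * (vol (closedBall x ε)).toReal :=
          mul_le_mul_of_nonneg_left hlo (by positivity)
  -- differentiation theorem
  intro r hr
  set v := IsUnifLocDoublingMeasure.vitaliFamily vol 1 with hv
  have hrn : ν.rnDeriv vol =ᵐ[vol] fun x => ENNReal.ofReal (h x) := by
    rw [hν]; exact Measure.rnDeriv_withDensity vol hhmeas.ennreal_ofReal
  filter_upwards [v.ae_tendsto_rnDeriv ν, hrn] with x hx hx'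
  rw [hx'] at hx
  have hcb : Tendsto (fun ρ : ℝ => closedBall x ρ) (nhdsWithin 0 (Set.Ioi 0)) (v.filterAt x) := by
    apply IsUnifLocDoublingMeasure.tendsto_closedBall_filterAt vol (K := 1)
      (fun _ => x) id tendsto_id
    filter_upwards [self_mem_nhdsWithin] with ρ hρ
    simp only [mem_closedBall, dist_self, id]
    have : (0:ℝ) < ρ := hρ
    linarith
  have hx1 : Tendsto (fun ρ : ℝ => ν (closedBall x ρ) / vol (closedBall x ρ))
      (nhdsWithin 0 (Set.Ioi 0)) (nhds (ENNReal.ofReal (h x))) := hx.comp hcb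
  have hx2 : Tendsto (fun ρ : ℝ => (ν (closedBall x ρ)).toReal / (vol (closedBall x ρ)).toReal)
      (nhdsWithin 0 (Set.Ioi 0)) (nhds (h x)) := by
    have := (ENNReal.tendsto_toReal ENNReal.ofReal_ne_top).comp hx1
    simpa [Function.comp_def, ENNReal.toReal_div, ENNReal.toReal_ofReal (hhnonneg x)] using this
  set H := h x with hHdef
  have hH : 0 ≤ H := hhnonneg x
  set L := ω * r ^ d with hLdef
  have hLpos : 0 < L := by positivity
  rw [Metric.tendsto_nhds]
  intro ε hε
  -- choose δ
  obtain ⟨δ, hδpos, hδhalf, hδ1, hδ2⟩ : ∃ δ : ℝ, 0 < δ ∧ δ ≤ 1 / 2 ∧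
      δ * (L * (H + 2)) ≤ ε / 2 ∧ δ * (L * (1 + 2 * H)) ≤ ε / 2 := by
    have hKpos : 0 < L * (H + 2) + L * (1 + 2 * H) + 1 := by positivity
    refine ⟨min (1 / 2) (ε / (2 * (L * (H + 2) + L * (1 + 2 * H) + 1))),
      lt_min (by norm_num) (by positivity), min_le_left _ _, ?_, ?_⟩ <;>
    · have h1 : min (1 / 2) (ε / (2 * (L * (H + 2) + L * (1 + 2 * H) + 1))) ≤
          ε / (2 * (L * (H + 2) + L * (1 + 2 * H) + 1)) := min_le_right _ _
      have h0 : 0 ≤ min (1 / 2) (ε / (2 * (L * (H + 2) + L * (1 + 2 * H) + 1))) :=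
        le_min (by norm_num) (by positivity)
      rw [le_div_iff₀ (by positivity)] at h1
      nlinarith [mul_nonneg hLpos.le hH, hLpos.le, h0, h1]
  -- s with s^d = 1 - δ
  set s := (1 - δ) ^ ((d : ℝ)⁻¹) with hsdef
  have h1δ : (0:ℝ) < 1 - δ := by linarith
  have hspos : 0 < s := Real.rpow_pos_of_pos h1δ _
  have hs1 : s < 1 := by
    apply Real.rpow_lt_one h1δ.le (by linarith) (by positivity)
  have hsd : s ^ d = 1 - δ := by
    rw [hsdef, ← Real.rpow_natCast ((1 - δ) ^ ((d : ℝ)⁻¹)) d, ← Real.rpow_mul h1δ.le,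
      inv_mul_cancel₀ hdcast.ne', Real.rpow_one]
  -- get radius thresholds
  obtain ⟨ρ₁, hρ₁pos, hρ₁⟩ := Metric.tendsto_nhdsWithin_nhds.1 hx2 δ hδpos
  obtain ⟨r₂, hr₂pos, hcl⟩ := hclosed δ hδpos
  -- eventual facts about n
  have hρ0 : Tendsto (fun n : ℕ => r * (n : ℝ) ^ (-(1 : ℝ) / d)) atTop (nhds 0) := by
    have h1 : Tendsto (fun y : ℝ => y ^ (-((1:ℝ) / d))) atTop (nhds 0) :=
      tendsto_rpow_neg_atTop (by positivity)
    have h2 : Tendsto (fun n : ℕ => ((n : ℝ)) ^ (-(1 : ℝ) / d)) atTop (nhds 0) := by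
      have := h1.comp tendsto_natCast_atTop_atTop (α := ℕ)
      simpa [Function.comp_def, neg_div] using this
    simpa using h2.const_mul r
  have hEsmall : ∀ᶠ n : ℕ in atTop, r * (n : ℝ) ^ (-(1 : ℝ) / d) < min ρ₁ r₂ :=
    hρ0.eventually_lt_const (lt_min hρ₁pos hr₂pos)
  filter_upwards [eventually_ge_atTop 1, hEsmall] with n hn1 hsmall
  -- setup
  set ρ := r * (n : ℝ) ^ (-(1 : ℝ) / d) with hρdef
  have hnpos : (0:ℝ) < (n : ℝ) := by exact_mod_cast hn1
  have hρpos : 0 < ρ := by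
    have := Real.rpow_pos_of_pos hnpos (-(1 : ℝ) / d)
    positivity
  have hnρd : (n : ℝ) * ρ ^ d = r ^ d := by
    have hpow : ((n : ℝ) ^ (-(1 : ℝ) / d)) ^ d = (n : ℝ)⁻¹ := by
      rw [← Real.rpow_natCast ((n : ℝ) ^ (-(1 : ℝ) / d)) d, ← Real.rpow_mul hnpos.le,
        div_mul_cancel₀ _ hdcast.ne']
      simpa using Real.rpow_neg_one (n : ℝ)
    rw [hρdef, mul_pow, hpow]
    field_simp
  have hρρ₁ : ρ < ρ₁ := lt_of_lt_of_le hsmall (min_le_left _ _)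
  have hρr₂ : ρ < r₂ := lt_of_lt_of_le hsmall (min_le_right _ _)
  have hsρpos : 0 < s * ρ := by positivity
  have hsρlt : s * ρ < ρ := by nlinarith
  -- volume bounds
  obtain ⟨hV1lo, hV1up⟩ := hcl ρ hρpos hρr₂ x
  obtain ⟨hV2lo, hV2up⟩ := hcl (s * ρ) hsρpos (lt_trans hsρlt hρr₂) x
  set V := (vol (closedBall x ρ)).toReal with hVdef
  set Vs := (vol (closedBall x (s * ρ))).toReal with hVsdef
  have hVpos : 0 < V := lt_of_lt_of_le (by positivity : (0:ℝ) < (1 - δ) * (ω * ρ ^ d)) hV1lo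
  have hVspos : 0 < Vs :=
    lt_of_lt_of_le (by positivity : (0:ℝ) < (1 - δ) * (ω * (s * ρ) ^ d)) hV2lo
  -- ratio bounds
  have hF1 : |( ν (closedBall x ρ)).toReal / V - H| < δ := by
    have := hρ₁ (Set.mem_Ioi.2 hρpos) (by
      rw [Real.dist_eq, sub_zero, abs_of_pos hρpos]; exact hρρ₁)
    rwa [Real.dist_eq] at this
  have hF2 : |( ν (closedBall x (s * ρ))).toReal / Vs - H| < δ := by
    have := hρ₁ (Set.mem_Ioi.2 hsρpos) (by
      rw [Real.dist_eq, sub_zero, abs_of_pos hsρpos]; exact lt_trans hsρlt hρρ₁)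
    rwa [Real.dist_eq] at this
  set νc := (ν (closedBall x ρ)).toReal with hνcdef
  set νcs := (ν (closedBall x (s * ρ))).toReal with hνcsdef
  set A := (ν (ball x ρ)).toReal with hAdef
  -- sandwich for ν of the open ball
  have hA1 : A ≤ νc :=
    (ENNReal.toReal_le_toReal (measure_ne_top _ _) (measure_ne_top _ _)).2
      (measure_mono ball_subset_closedBall)
  have hA2 : νcs ≤ A :=
    (ENNReal.toReal_le_toReal (measure_ne_top _ _) (measure_ne_top _ _)).2
      (measure_mono (closedBall_subset_ball hsρlt))
  -- upper bound
  have hνcup : νc ≤ (H + δ) * ((1 + δ) * (ω * ρ ^ d)) := by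
    have heq : νc = (νc / V) * V := (div_mul_cancel₀ _ hVpos.ne').symm
    have hr1 : νc / V ≤ H + δ := by have := (abs_lt.1 hF1).2; linarith
    have hr0 : 0 ≤ νc / V := div_nonneg ENNReal.toReal_nonneg ENNReal.toReal_nonneg
    calc νc = (νc / V) * V := heq
      _ ≤ (H + δ) * V := mul_le_mul_of_nonneg_right hr1 hVpos.le
      _ ≤ (H + δ) * ((1 + δ) * (ω * ρ ^ d)) :=
          mul_le_mul_of_nonneg_left hV1up (by linarith)
  -- lower bound
  have hνcslo : (H - δ) * ((1 - δ) * (ω * (s * ρ) ^ d)) ≤ νcs := by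
    have heq : νcs = (νcs / Vs) * Vs := (div_mul_cancel₀ _ hVspos.ne').symm
    have hr1 : H - δ ≤ νcs / Vs := by have := (abs_lt.1 hF2).1; linarith
    have hr0 : 0 ≤ νcs / Vs := div_nonneg ENNReal.toReal_nonneg ENNReal.toReal_nonneg
    calc (H - δ) * ((1 - δ) * (ω * (s * ρ) ^ d))
        ≤ (νcs / Vs) * ((1 - δ) * (ω * (s * ρ) ^ d)) :=
          mul_le_mul_of_nonneg_right hr1 (by positivity)
      _ ≤ (νcs / Vs) * Vs := mul_le_mul_of_nonneg_left hV2lo hr0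
      _ = νcs := heq.symm
  -- combine with multiplication by n
  have hup : (n : ℝ) * A ≤ (H + δ) * (1 + δ) * L := by
    calc (n : ℝ) * A ≤ (n : ℝ) * ((H + δ) * ((1 + δ) * (ω * ρ ^ d))) :=
          mul_le_mul_of_nonneg_left (hA1.trans hνcup) hnpos.le
      _ = (H + δ) * (1 + δ) * (ω * ((n : ℝ) * ρ ^ d)) := by ring
      _ = (H + δ) * (1 + δ) * L := by rw [hnρd]
  have hlow : (H - δ) * (1 - δ) ^ 2 * L ≤ (n : ℝ) * A := by
    have hpowsρ : (s * ρ) ^ d = (1 - δ) * ρ ^ d := by rw [mul_pow, hsd]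
    have h1 : (n : ℝ) * ((H - δ) * ((1 - δ) * (ω * (s * ρ) ^ d))) ≤ (n : ℝ) * A :=
      mul_le_mul_of_nonneg_left (hνcslo.trans hA2) hnpos.le
    calc (H - δ) * (1 - δ) ^ 2 * L = (H - δ) * (1 - δ) ^ 2 * (ω * ((n : ℝ) * ρ ^ d)) := by
          rw [hnρd]
      _ = (n : ℝ) * ((H - δ) * ((1 - δ) * (ω * ((1 - δ) * ρ ^ d)))) := by ring
      _ = (n : ℝ) * ((H - δ) * ((1 - δ) * (ω * (s * ρ) ^ d))) := by rw [hpowsρ]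
      _ ≤ (n : ℝ) * A := h1
  -- conclude
  rw [Real.dist_eq, abs_lt]
  constructor
  · -- lower: want -(ε) < n A - L H, i.e. LH - nA < ε
    have key : (H - δ) * (1 - δ) ^ 2 * L =
        L * H - δ * (L * (1 + 2 * H)) + L * (δ ^ 2 * (H + 2 - δ)) := by ring
    have hnonneg : 0 ≤ L * (δ ^ 2 * (H + 2 - δ)) := by
      apply mul_nonneg hLpos.le
      apply mul_nonneg (sq_nonneg _)
      linarith
    linarith [hlow, hδ2, key, hnonneg, hε]
  · -- upper: n A - LH < ε
    have key : (H + δ) * (1 + δ) * L = L * H + δ * (L * (H + 1 + δ)) := by ring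
    have hstep : δ * (L * (H + 1 + δ)) ≤ δ * (L * (H + 2)) := by
      apply mul_le_mul_of_nonneg_left _ hδpos.le
      apply mul_le_mul_of_nonneg_left _ hLpos.le
      linarith
    linarith [hup, hδ1, key, hstep, hε]
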